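/- arXiv:1811.06848 — 2 statements merged into one kernel-verified Lean document; each statement's English description precedes it below -/
import Mathlib

section
/- Let φ be an n×n real matrix whose symmetric part φ_s is positive-definite and let F be an antisymmetric n×n real matrix. Then the block matrix g = [[(φ⁻¹)_s, φ⁻¹F/2], [−F(φᵀ)⁻¹/2, φ_s]] (as a symmetric bilinear form via its symmetric part equal to itself) is positive-definite if and only if both φ_s and φ_s + (1/4) F (φ_s)⁻¹ F are positive-definite. -/
open Matrix

section Aux

variable {m p : Type*} [Fintype m] [DecidableEq m] [Fintype p]

/-- Positive-definite version of the Schur complement criterion over ℝ. -/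
theorem aux_posDef_fromBlocks₁₁ {A : Matrix m m ℝ} (B : Matrix m p ℝ) (D : Matrix p p ℝ)
    (hA : A.PosDef) [Invertible A] :
    (fromBlocks A B Bᴴ D).PosDef ↔ (D - Bᴴ * A⁻¹ * B).PosDef := by
  rw [posDef_iff_dotProduct_mulVec, Matrix.IsHermitian.fromBlocks₁₁ _ _ hA.1, posDef_iff_dotProduct_mulVec]
  constructor
  · rintro ⟨h1, h2⟩
    refine ⟨h1, fun x hx => ?_⟩
    have hz : (-((A⁻¹ * B) *ᵥ x) ⊕ᵥ x) ≠ 0 := by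
      intro h
      apply hx
      funext i
      simpa using congrFun h (Sum.inr i)
    have := h2 hz
    rw [dotProduct_mulVec, schur_complement_eq₁₁ B D _ _ hA.1, neg_add_cancel,
      dotProduct_zero, zero_add] at this
    rwa [dotProduct_mulVec]
  · rintro ⟨h1, h2⟩
    refine ⟨h1, fun x hx => ?_⟩
    rw [dotProduct_mulVec, ← Sum.elim_comp_inl_inr x, schur_complement_eq₁₁ B D _ _ hA.1]
    by_cases hy : x ∘ Sum.inr = 0
    · have hx1 : x ∘ Sum.inl ≠ 0 := by
        intro h
        apply hx
        funext i
        cases i with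
        | inl i => exact congrFun h i
        | inr i => exact congrFun hy i
      have h1pos := hA.dotProduct_mulVec_pos hx1
      rw [dotProduct_mulVec] at h1pos
      rw [hy, mulVec_zero, add_zero]
      simpa using h1pos
    · have h2pos := h2 hy
      rw [dotProduct_mulVec] at h2pos
      have h1nonneg := hA.posSemidef.dotProduct_mulVec_nonneg (x ∘ Sum.inl + (A⁻¹ * B) *ᵥ (x ∘ Sum.inr))
      rw [dotProduct_mulVec] at h1nonneg
      exact add_pos_of_nonneg_of_pos h1nonneg h2pos

/-- Conjugation of a positive definite matrix by an invertible matrix. -/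
theorem aux_posDef_conj {M S : Matrix m m ℝ} (hS : S.PosDef) [Invertible M] :
    (M * S * Mᵀ).PosDef := by
  refine Matrix.PosDef.of_dotProduct_mulVec_pos ?_ ?_
  · have h := hS.1
    rw [Matrix.IsHermitian] at h ⊢
    rw [conjTranspose_mul, conjTranspose_mul, h,
      conjTranspose_eq_transpose_of_trivial, conjTranspose_eq_transpose_of_trivial,
      transpose_transpose, Matrix.mul_assoc]
  · intro x hx
    have hy : Mᵀ *ᵥ x ≠ 0 := by
      intro h
      apply hx
      have h2 : ⅟(Mᵀ) *ᵥ (Mᵀ *ᵥ x) = ⅟(Mᵀ) *ᵥ 0 := by rw [h]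
      rwa [mulVec_mulVec, invOf_mul_self, one_mulVec, mulVec_zero] at h2
    have h3 := hS.dotProduct_mulVec_pos hy
    calc (0:ℝ) < star (Mᵀ *ᵥ x) ⬝ᵥ S *ᵥ (Mᵀ *ᵥ x) := h3
      _ = star x ⬝ᵥ (M * S * Mᵀ) *ᵥ x := by
          rw [star_trivial, star_trivial, ← mulVec_mulVec, ← mulVec_mulVec,
            dotProduct_mulVec x, ← mulVec_transpose]

end Aux

/-- Positive-definiteness of the metric block matrix
`g = [[(φ⁻¹)_s, φ⁻¹F/2], [−F(φᵀ)⁻¹/2, φ_s]]` is equivalent to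
positive-definiteness of both `φ_s` and `φ_s + (1/4) F (φ_s)⁻¹ F`. -/
theorem metric_posDef_iff {n : ℕ} (φ F : Matrix (Fin n) (Fin n) ℝ)
    (hφ : Invertible φ) (hF : Fᵀ = -F)
    (hs : ((1/2 : ℝ) • (φ + φᵀ)).PosDef) :
    (fromBlocks
        ((1/2 : ℝ) • (φ⁻¹ + (φ⁻¹)ᵀ)) ((1/2 : ℝ) • (φ⁻¹ * F))
        (-((1/2 : ℝ) • (F * (φᵀ)⁻¹))) ((1/2 : ℝ) • (φ + φᵀ))).PosDef ↔
      (((1/2 : ℝ) • (φ + φᵀ)).PosDef ∧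
        (((1/2 : ℝ) • (φ + φᵀ)) +
          (1/4 : ℝ) • (F * ((1/2 : ℝ) • (φ + φᵀ))⁻¹ * F)).PosDef) := by
  set S : Matrix (Fin n) (Fin n) ℝ := (1/2 : ℝ) • (φ + φᵀ) with hSdef
  set B : Matrix (Fin n) (Fin n) ℝ := (1/2 : ℝ) • (φ⁻¹ * F) with hBdef
  have hdet : IsUnit φ.det := isUnit_det_of_invertible φ
  have hdetT : IsUnit φᵀ.det := by rwa [det_transpose]
  have hinvinv : Invertible φ⁻¹ := invertibleOfRightInverse φ⁻¹ φ (Matrix.nonsing_inv_mul _ hdet)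
  -- the upper-left block as a conjugation
  have hA_eq : (1/2 : ℝ) • (φ⁻¹ + (φ⁻¹)ᵀ) = φ⁻¹ * S * (φ⁻¹)ᵀ := by
    rw [hSdef, transpose_nonsing_inv, Matrix.mul_smul, Matrix.smul_mul]
    congr 1
    rw [Matrix.mul_add, Matrix.nonsing_inv_mul _ hdet, Matrix.add_mul, Matrix.one_mul,
      Matrix.mul_assoc, Matrix.mul_nonsing_inv _ hdetT, Matrix.mul_one, add_comm]
  have hA_pd : ((1/2 : ℝ) • (φ⁻¹ + (φ⁻¹)ᵀ)).PosDef := by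
    rw [hA_eq]; exact aux_posDef_conj hs
  have hA_inv : Invertible ((1/2 : ℝ) • (φ⁻¹ + (φ⁻¹)ᵀ)) := hA_pd.isUnit.invertible
  -- lower-left block is Bᴴ
  have hBH : Bᴴ = -((1/2 : ℝ) • (F * (φᵀ)⁻¹)) := by
    rw [hBdef, conjTranspose_smul, conjTranspose_mul,
      conjTranspose_eq_transpose_of_trivial, conjTranspose_eq_transpose_of_trivial,
      hF, transpose_nonsing_inv]
    simp [Matrix.neg_mul]
  -- inverse of the upper-left block
  have hAinv_eq : ((1/2 : ℝ) • (φ⁻¹ + (φ⁻¹)ᵀ))⁻¹ = φᵀ * S⁻¹ * φ := by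
    rw [hA_eq, Matrix.mul_inv_rev, Matrix.mul_inv_rev, transpose_nonsing_inv,
      Matrix.nonsing_inv_nonsing_inv _ hdetT, Matrix.nonsing_inv_nonsing_inv _ hdet,
      ← Matrix.mul_assoc]
  have hM : (F * (φᵀ)⁻¹) * (φᵀ * S⁻¹ * φ) * (φ⁻¹ * F) = F * S⁻¹ * F := by
    simp only [Matrix.mul_assoc]
    rw [Matrix.mul_nonsing_inv_cancel_left _ _ hdet,
      Matrix.nonsing_inv_mul_cancel_left _ _ hdetT]
  -- the Schur complement
  have hSchur : S - Bᴴ * ((1/2 : ℝ) • (φ⁻¹ + (φ⁻¹)ᵀ))⁻¹ * B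
      = S + (1/4 : ℝ) • (F * S⁻¹ * F) := by
    rw [hBH, hAinv_eq, hBdef, Matrix.neg_mul, Matrix.neg_mul, sub_neg_eq_add]
    congr 1
    rw [Matrix.smul_mul, Matrix.smul_mul, Matrix.mul_smul, smul_smul, hM]
    norm_num
  rw [← hBH, aux_posDef_fromBlocks₁₁ B S hA_pd, hSchur]
  exact (and_iff_right hs).symm
end

section
/- Let φ_s be symmetric positive-definite, C antisymmetric, φ = φ_s + C, F antisymmetric, and Ξ = φ_s + (1/4)F(φ_s)⁻¹F invertible. Then the 2n×2n block matrix [[−(φᵀ)⁻¹F/2, −(φ⁻¹)_s],[φ_s + F(φᵀ)⁻¹F/2, F(φᵀ)⁻¹/2]] is invertible with inverse [[Ξ⁻¹F(φ_s)⁻¹φ/2, Ξ⁻¹],[(−φᵀ + AFΞ⁻¹F/2)(φ_s)⁻¹φ, AFΞ⁻¹]] where A = φᵀ(φ_s)⁻¹/2 − I. -/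
open Matrix

section AuxRing
variable {R : Type*} [Ring R] [Algebra ℝ R]

private lemma aux_blocks (s si F φ ψ a b x : R)
    (hψ : ψ = s + s - φ)
    (hssi : s * si = 1) (hsis : si * s = 1)
    (hφa : φ * a = 1) (haφ : a * φ = 1)
    (hψb : ψ * b = 1) (hbψ : b * ψ = 1)
    (hΞx : (s + (1/4:ℝ) • (F * si * F)) * x = 1) :
    (-((1/2:ℝ) • (b * F))) * ((1/2:ℝ) • (x * F * si * φ))
      + (-((1/2:ℝ) • (a + b))) * ((-ψ + (1/2:ℝ) • (((1/2:ℝ) • (ψ * si) - 1) * F * x * F)) * (si * φ)) = 1 ∧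
    (-((1/2:ℝ) • (b * F))) * x + (-((1/2:ℝ) • (a + b))) * (((1/2:ℝ) • (ψ * si) - 1) * F * x) = 0 ∧
    (s + (1/2:ℝ) • (F * b * F)) * ((1/2:ℝ) • (x * F * si * φ))
      + ((1/2:ℝ) • (F * b)) * ((-ψ + (1/2:ℝ) • (((1/2:ℝ) • (ψ * si) - 1) * F * x * F)) * (si * φ)) = 0 ∧
    (s + (1/2:ℝ) • (F * b * F)) * x + ((1/2:ℝ) • (F * b)) * (((1/2:ℝ) • (ψ * si) - 1) * F * x) = 1 := by
  have r1 : ∀ z : R, a * (φ * z) = z := fun z => by rw [← mul_assoc, haφ, one_mul]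
  have r2 : ∀ z : R, φ * (a * z) = z := fun z => by rw [← mul_assoc, hφa, one_mul]
  have r3 : ∀ z : R, b * (ψ * z) = z := fun z => by rw [← mul_assoc, hbψ, one_mul]
  have r4 : ∀ z : R, ψ * (b * z) = z := fun z => by rw [← mul_assoc, hψb, one_mul]
  have r5 : ∀ z : R, s * (si * z) = z := fun z => by rw [← mul_assoc, hssi, one_mul]
  have r6 : ∀ z : R, si * (s * z) = z := fun z => by rw [← mul_assoc, hsis, one_mul]
  have d1 : ∀ z : R, a * (ψ * z) = (2:ℝ) • (a * (s * z)) - z := fun z => by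
    rw [hψ]; simp only [sub_mul, add_mul, mul_sub, mul_add, r1, two_smul]; try abel
  have d1' : a * ψ = (2:ℝ) • (a * s) - 1 := by
    have := d1 1; simpa using this
  have hx0 : s * x = 1 - (1/4:ℝ) • (F * (si * (F * x))) := by
    have h := hΞx
    rw [add_mul, smul_mul_assoc] at h
    rw [eq_sub_iff_add_eq, ← h, mul_assoc, mul_assoc]
  have hx1 : ∀ z : R, s * (x * z) = z - (1/4:ℝ) • (F * (si * (F * (x * z)))) := fun z => by
    rw [← mul_assoc, hx0, sub_mul, one_mul, smul_mul_assoc, mul_assoc, mul_assoc, mul_assoc]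
  refine ⟨?_, ?_, ?_, ?_⟩ <;>
  · simp only [mul_assoc, neg_mul, mul_neg, neg_add, neg_sub, neg_neg, mul_add, add_mul, mul_sub,
      sub_mul, mul_one, one_mul, smul_mul_assoc, mul_smul_comm, smul_add, smul_sub, smul_neg,
      smul_smul, r1, r2, r3, r4, r5, r6, d1, d1', haφ, hφa, hbψ, hψb, hssi, hsis, hx1, hx0]
    module

end AuxRing

private lemma det_add_antisym_isUnit {n : ℕ} (φs C : Matrix (Fin n) (Fin n) ℝ)
    (hs : φs.PosDef) (hC : Cᵀ = -C) : IsUnit (φs + C).det := by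
  by_contra h
  rw [isUnit_iff_ne_zero, not_not] at h
  obtain ⟨v, hv, hveq⟩ := (Matrix.exists_mulVec_eq_zero_iff).mpr h
  have h1 : v ⬝ᵥ ((φs + C) *ᵥ v) = 0 := by rw [hveq, dotProduct_zero]
  have h2 : v ⬝ᵥ (C *ᵥ v) = 0 := by
    have h3 : v ⬝ᵥ (C *ᵥ v) = -(v ⬝ᵥ (C *ᵥ v)) := by
      calc v ⬝ᵥ (C *ᵥ v) = (v ᵥ* C) ⬝ᵥ v := Matrix.dotProduct_mulVec v C v
        _ = (Cᵀ *ᵥ v) ⬝ᵥ v := by rw [← Matrix.mulVec_transpose]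
        _ = -(v ⬝ᵥ (C *ᵥ v)) := by rw [hC, Matrix.neg_mulVec, neg_dotProduct, dotProduct_comm]
    linarith
  have h4 : v ⬝ᵥ (φs *ᵥ v) = 0 := by
    rw [Matrix.add_mulVec, dotProduct_add, h2, add_zero] at h1; exact h1
  have := hs.dotProduct_mulVec_pos hv
  simp only [star_trivial] at this
  rw [h4] at this
  exact lt_irrefl 0 this

/-- The block matrix `(J₊+J₋)/2 = [[−(φᵀ)⁻¹F/2, −(φ⁻¹)_s],[φ_s + F(φᵀ)⁻¹F/2, F(φᵀ)⁻¹/2]]`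
is invertible with inverse
`[[Ξ⁻¹F(φ_s)⁻¹φ/2, Ξ⁻¹],[(−φᵀ + AFΞ⁻¹F/2)(φ_s)⁻¹φ, AFΞ⁻¹]]`,
where `φ = φ_s + C`, `Ξ = φ_s + (1/4)F(φ_s)⁻¹F`, `A = φᵀ(φ_s)⁻¹/2 − I`. -/
theorem block_inverse {n : ℕ} (φs C F : Matrix (Fin n) (Fin n) ℝ)
    (hs : φs.PosDef) (hC : Cᵀ = -C) (hF : Fᵀ = -F)
    (hΞ : IsUnit (φs + (1/4 : ℝ) • (F * φs⁻¹ * F)).det) :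
    (fromBlocks
        (-((1/2 : ℝ) • (((φs + C)ᵀ)⁻¹ * F)))
        (-((1/2 : ℝ) • ((φs + C)⁻¹ + ((φs + C)⁻¹)ᵀ)))
        (φs + (1/2 : ℝ) • (F * ((φs + C)ᵀ)⁻¹ * F))
        ((1/2 : ℝ) • (F * ((φs + C)ᵀ)⁻¹))) *
      (fromBlocks
        ((1/2 : ℝ) • ((φs + (1/4 : ℝ) • (F * φs⁻¹ * F))⁻¹ * F * φs⁻¹ * (φs + C)))
        ((φs + (1/4 : ℝ) • (F * φs⁻¹ * F))⁻¹)
        ((-(φs + C)ᵀ + (1/2 : ℝ) • (((1/2 : ℝ) • ((φs + C)ᵀ * φs⁻¹) - 1) * F *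
            (φs + (1/4 : ℝ) • (F * φs⁻¹ * F))⁻¹ * F)) * (φs⁻¹ * (φs + C)))
        (((1/2 : ℝ) • ((φs + C)ᵀ * φs⁻¹) - 1) * F *
          (φs + (1/4 : ℝ) • (F * φs⁻¹ * F))⁻¹)) = 1 ∧
    (fromBlocks
        ((1/2 : ℝ) • ((φs + (1/4 : ℝ) • (F * φs⁻¹ * F))⁻¹ * F * φs⁻¹ * (φs + C)))
        ((φs + (1/4 : ℝ) • (F * φs⁻¹ * F))⁻¹)
        ((-(φs + C)ᵀ + (1/2 : ℝ) • (((1/2 : ℝ) • ((φs + C)ᵀ * φs⁻¹) - 1) * F *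
            (φs + (1/4 : ℝ) • (F * φs⁻¹ * F))⁻¹ * F)) * (φs⁻¹ * (φs + C)))
        (((1/2 : ℝ) • ((φs + C)ᵀ * φs⁻¹) - 1) * F *
          (φs + (1/4 : ℝ) • (F * φs⁻¹ * F))⁻¹)) *
      (fromBlocks
        (-((1/2 : ℝ) • (((φs + C)ᵀ)⁻¹ * F)))
        (-((1/2 : ℝ) • ((φs + C)⁻¹ + ((φs + C)⁻¹)ᵀ)))
        (φs + (1/2 : ℝ) • (F * ((φs + C)ᵀ)⁻¹ * F))
        ((1/2 : ℝ) • (F * ((φs + C)ᵀ)⁻¹))) = 1 := by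
  have hsymm : φsᵀ = φs := by
    ext i j; exact congrFun (congrFun hs.1 i) j
  have hφdet : IsUnit (φs + C).det := det_add_antisym_isUnit φs C hs hC
  have hψdet : IsUnit ((φs + C)ᵀ).det := by rw [Matrix.det_transpose]; exact hφdet
  have hsdet : IsUnit φs.det := hs.det_pos.ne'.isUnit
  have hψeq : (φs + C)ᵀ = φs + φs - (φs + C) := by
    rw [Matrix.transpose_add, hsymm, hC]; abel
  have key := aux_blocks (R := Matrix (Fin n) (Fin n) ℝ) φs φs⁻¹ F (φs + C) ((φs + C)ᵀ)
    ((φs + C)⁻¹) (((φs + C)ᵀ)⁻¹) ((φs + (1/4 : ℝ) • (F * φs⁻¹ * F))⁻¹)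
    hψeq (Matrix.mul_nonsing_inv _ hsdet) (Matrix.nonsing_inv_mul _ hsdet)
    (Matrix.mul_nonsing_inv _ hφdet) (Matrix.nonsing_inv_mul _ hφdet)
    (Matrix.mul_nonsing_inv _ hψdet) (Matrix.nonsing_inv_mul _ hψdet)
    (Matrix.mul_nonsing_inv _ hΞ)
  have htinv : ((φs + C)⁻¹)ᵀ = ((φs + C)ᵀ)⁻¹ := Matrix.transpose_nonsing_inv _
  have h1 : (fromBlocks
        (-((1/2 : ℝ) • (((φs + C)ᵀ)⁻¹ * F)))
        (-((1/2 : ℝ) • ((φs + C)⁻¹ + ((φs + C)⁻¹)ᵀ)))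
        (φs + (1/2 : ℝ) • (F * ((φs + C)ᵀ)⁻¹ * F))
        ((1/2 : ℝ) • (F * ((φs + C)ᵀ)⁻¹))) *
      (fromBlocks
        ((1/2 : ℝ) • ((φs + (1/4 : ℝ) • (F * φs⁻¹ * F))⁻¹ * F * φs⁻¹ * (φs + C)))
        ((φs + (1/4 : ℝ) • (F * φs⁻¹ * F))⁻¹)
        ((-(φs + C)ᵀ + (1/2 : ℝ) • (((1/2 : ℝ) • ((φs + C)ᵀ * φs⁻¹) - 1) * F *
            (φs + (1/4 : ℝ) • (F * φs⁻¹ * F))⁻¹ * F)) * (φs⁻¹ * (φs + C)))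
        (((1/2 : ℝ) • ((φs + C)ᵀ * φs⁻¹) - 1) * F *
          (φs + (1/4 : ℝ) • (F * φs⁻¹ * F))⁻¹)) = 1 := by
    rw [htinv, Matrix.fromBlocks_multiply, key.1, key.2.1, key.2.2.1, key.2.2.2]
    exact Matrix.fromBlocks_one
  exact ⟨h1, mul_eq_one_comm.mp h1⟩
end
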